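/- Let a > 0, let Ω = (0,a)² ⊂ ℝ² be the open square of side a and let A = ∂Ω be its boundary. Then for every s ∈ ℂ with Re s > 1, the integral ∫_Ω d(x, A)^{s−2} dx converges absolutely and equals 2^{3−s} a^s / (s(s−1)), where d(x,A) is the Euclidean distance from x to A. -/

import Mathlib

open MeasureTheory Metric Filter Set
open scoped ENNReal Topology Real

set_option maxHeartbeats 1000000

section Stmt7Aux

open intervalIntegral

private lemma stmt7_II_congr {f g : ℝ → ℂ} {u v : ℝ} (h : Set.EqOn g f (Set.uIcc u v))
    (hg : IntervalIntegrable g volume u v) : IntervalIntegrable f volume u v := by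
  rw [intervalIntegrable_iff] at *
  exact hg.congr_fun (h.mono Set.uIoc_subset_uIcc) measurableSet_uIoc

private lemma stmt7_frontier {a : ℝ} (ha : 0 < a) :
    frontier {y : EuclideanSpace ℝ (Fin 2) | ∀ i, y i ∈ Ioo 0 a}
      = {y | (∀ i, y i ∈ Icc 0 a) ∧ ∃ i, y i = 0 ∨ y i = a} := by
  have hΩ : {y : EuclideanSpace ℝ (Fin 2) | ∀ i, y i ∈ Ioo 0 a}
      = PiLp.homeomorph 2 (fun _ : Fin 2 => ℝ) ⁻¹' Set.pi univ (fun _ => Ioo 0 a) := by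
    ext y; exact ⟨fun h i _ => h i, fun h i => h i trivial⟩
  rw [hΩ, ← Homeomorph.preimage_frontier, frontier, closure_pi_set, interior_pi_set finite_univ]
  ext y
  rw [Set.mem_preimage]
  change WithLp.ofLp y ∈ _ ↔ _
  constructor
  · rintro ⟨h1, h2⟩
    have h1' : ∀ i, y i ∈ Icc 0 a := by
      intro i; have := h1 i trivial; simpa [closure_Ioo ha.ne] using this
    refine ⟨h1', ?_⟩
    by_contra hcon; push_neg at hcon
    apply h2; intro i _
    have hi := h1' i
    have hc := hcon i
    simp only [interior_Ioo]
    exact ⟨lt_of_le_of_ne hi.1 (Ne.symm hc.1), lt_of_le_of_ne hi.2 hc.2⟩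
  · rintro ⟨h1, i, h2⟩
    constructor
    · intro j _
      simpa [closure_Ioo ha.ne] using h1 j
    · intro hall
      have := hall i trivial
      simp only [interior_Ioo, mem_Ioo] at this
      rcases h2 with h | h
      · exact this.1.ne' h
      · exact this.2.ne h

private lemma stmt7_infDist {a : ℝ} (ha : 0 < a) (x : EuclideanSpace ℝ (Fin 2))
    (hx : ∀ i, x i ∈ Ioo 0 a) :
    infDist x {y : EuclideanSpace ℝ (Fin 2) | (∀ i, y i ∈ Icc 0 a) ∧ ∃ i, y i = 0 ∨ y i = a}
      = min (min (x 0) (a - x 0)) (min (x 1) (a - x 1)) := by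
  set S : Set (EuclideanSpace ℝ (Fin 2)) :=
    {y | (∀ i, y i ∈ Icc 0 a) ∧ ∃ i, y i = 0 ∨ y i = a} with hS
  set m := min (min (x 0) (a - x 0)) (min (x 1) (a - x 1)) with hm
  have hcoord : ∀ (y : EuclideanSpace ℝ (Fin 2)) (i : Fin 2), |x i - y i| ≤ dist x y := by
    intro y i
    rw [← Real.dist_eq, EuclideanSpace.dist_eq]
    have h1 : dist (x i) (y i) = Real.sqrt (dist (x i) (y i) ^ 2) :=
      (Real.sqrt_sq dist_nonneg).symm
    rw [h1]
    exact Real.sqrt_le_sqrt (Finset.single_le_sum (f := fun j => dist (x j) (y j) ^ 2)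
      (fun j _ => sq_nonneg _) (Finset.mem_univ i))
  have hx0 := hx 0
  have hx1 := hx 1
  -- candidate points
  have hmem : ∀ (i : Fin 2) (c : ℝ), c = 0 ∨ c = a →
      (WithLp.toLp 2 (Function.update x i c) : EuclideanSpace ℝ (Fin 2)) ∈ S := by
    intro i c hc
    constructor
    · intro j
      rcases eq_or_ne j i with rfl | hj
      · simp only [PiLp.toLp_apply, Function.update_self]
        rcases hc with rfl | rfl
        · exact ⟨le_refl _, ha.le⟩
        · exact ⟨ha.le, le_refl _⟩
      · simp only [PiLp.toLp_apply, Function.update_of_ne hj]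
        exact ⟨(hx j).1.le, (hx j).2.le⟩
    · exact ⟨i, by simpa using hc⟩
  have hdistu : ∀ (i : Fin 2) (c : ℝ),
      dist x (WithLp.toLp 2 (Function.update x i c) : EuclideanSpace ℝ (Fin 2)) = |x i - c| := by
    intro i c
    rw [EuclideanSpace.dist_eq]
    rw [show (∑ j, dist (x j) ((WithLp.toLp 2 (Function.update x i c) : EuclideanSpace ℝ (Fin 2)) j) ^ 2) = dist (x i) c ^ 2 from ?_]
    · rw [Real.sqrt_sq_eq_abs, ← Real.dist_eq, abs_of_nonneg dist_nonneg]
    · rw [Finset.sum_eq_single i]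
      · simp
      · intro j _ hj; simp [Function.update_of_ne hj]
      · simp
  have hSne : S.Nonempty := ⟨_, hmem 0 0 (Or.inl rfl)⟩
  refine le_antisymm ?_ ?_
  · -- infDist ≤ m : four upper bounds
    have h00 : infDist x S ≤ x 0 := by
      calc infDist x S ≤ dist x (WithLp.toLp 2 (Function.update x 0 0)) := infDist_le_dist_of_mem (hmem 0 0 (Or.inl rfl))
        _ = |x 0 - 0| := hdistu 0 0
        _ = x 0 := by rw [sub_zero, abs_of_pos hx0.1]
    have h0a : infDist x S ≤ a - x 0 := by
      calc infDist x S ≤ dist x (WithLp.toLp 2 (Function.update x 0 a)) := infDist_le_dist_of_mem (hmem 0 a (Or.inr rfl))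
        _ = |x 0 - a| := hdistu 0 a
        _ = a - x 0 := by rw [abs_sub_comm, abs_of_pos (by linarith [hx0.2])]
    have h10 : infDist x S ≤ x 1 := by
      calc infDist x S ≤ dist x (WithLp.toLp 2 (Function.update x 1 0)) := infDist_le_dist_of_mem (hmem 1 0 (Or.inl rfl))
        _ = |x 1 - 0| := hdistu 1 0
        _ = x 1 := by rw [sub_zero, abs_of_pos hx1.1]
    have h1a : infDist x S ≤ a - x 1 := by
      calc infDist x S ≤ dist x (WithLp.toLp 2 (Function.update x 1 a)) := infDist_le_dist_of_mem (hmem 1 a (Or.inr rfl))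
        _ = |x 1 - a| := hdistu 1 a
        _ = a - x 1 := by rw [abs_sub_comm, abs_of_pos (by linarith [hx1.2])]
    simp only [hm, le_min_iff]
    exact ⟨⟨h00, h0a⟩, ⟨h10, h1a⟩⟩
  · -- m ≤ infDist
    by_contra hcon
    push_neg at hcon
    obtain ⟨y, hyS, hlt⟩ := (infDist_lt_iff hSne).1 hcon
    obtain ⟨hy1, i, hy2⟩ := hyS
    have hb := hcoord y i
    have hxi := hx i
    have hkey : m ≤ min (x i) (a - x i) := by
      fin_cases i
      · exact min_le_left _ _
      · exact min_le_right _ _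
    have : m ≤ |x i - y i| := by
      rcases hy2 with h | h <;> rw [h]
      · rw [sub_zero, abs_of_pos hxi.1]
        exact hkey.trans (min_le_left _ _)
      · rw [abs_sub_comm, abs_of_pos (by linarith [hxi.2] : (0:ℝ) < a - x i)]
        exact hkey.trans (min_le_right _ _)
    linarith

private lemma stmt7_inner_int {a : ℝ} (ha : 0 < a) {s : ℂ} (hs : 1 < s.re) {c : ℝ} (hc : 0 < c)
    (hca : c < a / 2) :
    ∫ y in (0:ℝ)..a, (↑(min c (min y (a - y))) : ℂ) ^ (s - 2)
      = a * (c:ℂ) ^ (s - 2) - 2 * (c:ℂ) ^ (s - 1) + 2 * (c:ℂ) ^ (s - 1) / (s - 1) := by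
  have h2 : -1 < (s - 2).re := by
    have : (s - 2).re = s.re - 2 := by simp
    linarith
  have hs1 : s - 1 ≠ 0 := fun h => by
    have := congrArg Complex.re h
    simp only [Complex.sub_re, Complex.one_re, Complex.zero_re] at this
    linarith
  have hc0 : (c:ℂ) ≠ 0 := by exact_mod_cast hc.ne'
  have hcac : c ≤ a - c := by linarith
  set f : ℝ → ℂ := fun y => (↑(min c (min y (a - y))) : ℂ) ^ (s - 2) with hf
  -- EqOn facts
  have e1 : Set.EqOn f (fun y : ℝ => (↑y : ℂ) ^ (s - 2)) (Set.uIcc 0 c) := by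
    intro y hy
    rw [Set.uIcc_of_le hc.le, Set.mem_Icc] at hy
    have h1 : min y (a - y) = y := min_eq_left (by linarith)
    simp only [hf, h1, min_eq_right hy.2]
  have e2 : Set.EqOn f (fun _ : ℝ => (↑c : ℂ) ^ (s - 2)) (Set.uIcc c (a - c)) := by
    intro y hy
    rw [Set.uIcc_of_le hcac, Set.mem_Icc] at hy
    have h1 : min c (min y (a - y)) = c := by
      rw [min_eq_left]
      exact le_min hy.1 (by linarith [hy.2])
    simp only [hf, h1]
  have e3 : Set.EqOn f (fun y : ℝ => (↑(a - y) : ℂ) ^ (s - 2)) (Set.uIcc (a - c) a) := by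
    intro y hy
    rw [Set.uIcc_of_le (by linarith), Set.mem_Icc] at hy
    have h1 : min y (a - y) = a - y := min_eq_right (by linarith)
    simp only [hf, h1, min_eq_right (by linarith [hy.1] : a - y ≤ c)]
  -- integrability of the three pieces
  have i1 : IntervalIntegrable f volume 0 c :=
    stmt7_II_congr e1.symm (intervalIntegrable_cpow' h2)
  have i2 : IntervalIntegrable f volume c (a - c) :=
    stmt7_II_congr e2.symm intervalIntegrable_const
  have i3 : IntervalIntegrable f volume (a - c) a := by
    refine stmt7_II_congr e3.symm ?_
    have := (intervalIntegrable_cpow' (a := 0) (b := c) h2).comp_sub_left a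
    simpa using this.symm
  -- values
  have v0 : ∀ d : ℝ, 0 < d → (∫ y in (0:ℝ)..d, (↑y : ℂ) ^ (s - 2)) = (d:ℂ) ^ (s-1) / (s-1) := by
    intro d hd
    rw [integral_cpow (Or.inl h2)]
    have : s - 2 + 1 = s - 1 := by ring
    rw [this, Complex.ofReal_zero, Complex.zero_cpow hs1, sub_zero]
  have v1 : (∫ y in (0:ℝ)..c, f y) = (c:ℂ) ^ (s-1) / (s-1) := by
    rw [integral_congr e1, v0 c hc]
  have v2 : (∫ y in c..(a - c), f y) = ((a:ℂ) - 2 * c) * (c:ℂ) ^ (s - 2) := by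
    rw [integral_congr e2, intervalIntegral.integral_const]
    rw [Complex.real_smul]
    push_cast
    ring
  have v3 : (∫ y in (a - c)..a, f y) = (c:ℂ) ^ (s-1) / (s-1) := by
    rw [integral_congr e3]
    have := integral_comp_sub_left (a := a - c) (b := a) (fun y : ℝ => (↑y : ℂ) ^ (s - 2)) a
    rw [this]
    simp only [sub_self, sub_sub_cancel]
    exact v0 c hc
  have split1 := integral_add_adjacent_intervals i1 i2
  have split2 := integral_add_adjacent_intervals (i1.trans i2) i3
  rw [← split2, ← split1, v1, v2, v3]
  have hpow : (c:ℂ) ^ (s - 1) = (c:ℂ) ^ (s - 2) * c := by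
    rw [show s - 1 = s - 2 + 1 by ring, Complex.cpow_add _ _ hc0, Complex.cpow_one]
  rw [hpow]
  field_simp
  ring

private lemma stmt7_outer_int {a : ℝ} (ha : 0 < a) {s : ℂ} (hs : 1 < s.re) :
    (∫ x in (0:ℝ)..a, (fun c : ℝ =>
        (a:ℂ) * (c:ℂ) ^ (s - 2) - 2 * (c:ℂ) ^ (s - 1) + 2 * (c:ℂ) ^ (s - 1) / (s - 1))
      (min x (a - x)))
      = (2:ℂ) ^ ((3:ℂ) - s) * (a:ℂ) ^ s / (s * (s - 1)) := by
  have h2 : -1 < (s - 2).re := by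
    have : (s - 2).re = s.re - 2 := by simp
    linarith
  have h1 : -1 < (s - 1).re := by
    have : (s - 1).re = s.re - 1 := by simp
    linarith
  have hs0 : s ≠ 0 := fun h => by simp [h] at hs; linarith
  have hs1 : s - 1 ≠ 0 := fun h => by
    have := congrArg Complex.re h
    simp only [Complex.sub_re, Complex.one_re, Complex.zero_re] at this
    linarith
  set H : ℝ → ℂ := fun c =>
    (a:ℂ) * (c:ℂ) ^ (s - 2) - 2 * (c:ℂ) ^ (s - 1) + 2 * (c:ℂ) ^ (s - 1) / (s - 1) with hH
  have hHint : IntervalIntegrable H volume 0 (a/2) := by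
    apply IntervalIntegrable.add
    · exact ((intervalIntegrable_cpow' h2).const_mul _).sub
        ((intervalIntegrable_cpow' h1).const_mul _)
    · exact ((intervalIntegrable_cpow' h1).const_mul _).div_const _
  have eq1 : Set.EqOn (fun x : ℝ => H (min x (a - x))) H (Set.uIcc 0 (a/2)) := by
    intro x hx
    rw [Set.uIcc_of_le (by linarith), Set.mem_Icc] at hx
    simp only [min_eq_left (by linarith [hx.2] : x ≤ a - x)]
  have eq2 : Set.EqOn (fun x : ℝ => H (min x (a - x))) (fun x => H (a - x))
      (Set.uIcc (a/2) a) := by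
    intro x hx
    rw [Set.uIcc_of_le (by linarith), Set.mem_Icc] at hx
    simp only [min_eq_right (by linarith [hx.1] : a - x ≤ x)]
  have iL : IntervalIntegrable (fun x : ℝ => H (min x (a - x))) volume 0 (a/2) :=
    stmt7_II_congr eq1.symm hHint
  have iR : IntervalIntegrable (fun x : ℝ => H (min x (a - x))) volume (a/2) a := by
    have h3 := hHint.comp_sub_left a
    rw [sub_zero, show a - a/2 = a/2 by ring] at h3
    exact stmt7_II_congr eq2.symm h3.symm
  have split := integral_add_adjacent_intervals iL iR
  have vL : (∫ x in (0:ℝ)..(a/2), H (min x (a - x))) = ∫ x in (0:ℝ)..(a/2), H x :=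
    integral_congr eq1
  have vR : (∫ x in (a/2)..a, H (min x (a - x))) = ∫ x in (0:ℝ)..(a/2), H x := by
    rw [integral_congr eq2, integral_comp_sub_left H a, sub_self,
      show a - a/2 = a/2 by ring]
  rw [← split, vL, vR]
  -- compute ∫ H on 0..a/2
  have v0 : ∀ r : ℂ, -1 < r.re → r + 1 ≠ 0 →
      (∫ x in (0:ℝ)..(a/2), (x:ℂ) ^ r) = ((a/2 : ℝ):ℂ) ^ (r + 1) / (r + 1) := by
    intro r hr hr1
    rw [integral_cpow (Or.inl hr), Complex.ofReal_zero, Complex.zero_cpow hr1, sub_zero]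
  have vH : (∫ x in (0:ℝ)..(a/2), H x)
      = (a:ℂ) * (((a/2:ℝ):ℂ) ^ (s-1) / (s-1)) - 2 * (((a/2:ℝ):ℂ) ^ s / s)
        + 2 * (((a/2:ℝ):ℂ) ^ s / s) / (s - 1) := by
    rw [hH]
    rw [integral_add (((intervalIntegrable_cpow' h2).const_mul _).sub
        ((intervalIntegrable_cpow' h1).const_mul _))
        (((intervalIntegrable_cpow' h1).const_mul _).div_const _),
      integral_sub ((intervalIntegrable_cpow' h2).const_mul _)
        ((intervalIntegrable_cpow' h1).const_mul _),
      intervalIntegral.integral_div, intervalIntegral.integral_const_mul, intervalIntegral.integral_const_mul,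
      v0 (s-2) h2 (by rwa [show s - 2 + 1 = s - 1 by ring]),
      v0 (s-1) h1 (by rwa [show s - 1 + 1 = s by ring]),
      show s - 2 + 1 = s - 1 by ring, show s - 1 + 1 = s by ring]
  rw [vH]
  -- algebra
  have hb0 : ((a/2:ℝ):ℂ) ≠ 0 := by
    simp only [ne_eq, Complex.ofReal_eq_zero]
    positivity
  have hab : (a:ℂ) * ((a/2:ℝ):ℂ) ^ (s-1) = 2 * ((a/2:ℝ):ℂ) ^ s := by
    rw [show s = s - 1 + 1 by ring, Complex.cpow_add _ _ hb0, Complex.cpow_one]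
    push_cast
    ring_nf
  have hbs : ((a/2:ℝ):ℂ) ^ s = (a:ℂ) ^ s * (2:ℂ) ^ (-s) := by
    rw [show ((a/2:ℝ):ℂ) = ((a:ℝ):ℂ) * ((2⁻¹:ℝ):ℂ) by push_cast; ring,
      Complex.mul_cpow_ofReal_nonneg ha.le (by norm_num),
      show ((2⁻¹:ℝ):ℂ) = (2:ℂ)⁻¹ by push_cast; ring,
      Complex.inv_cpow _ _ (by
        rw [show (2:ℂ) = ((2:ℝ):ℂ) by norm_num, Complex.arg_ofReal_of_nonneg (by norm_num)]
        exact Real.pi_ne_zero.symm),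
      ← Complex.cpow_neg]
  have h23 : (2:ℂ) ^ ((3:ℂ) - s) = 8 * (2:ℂ) ^ (-s) := by
    rw [show (3:ℂ) - s = (3:ℂ) + (-s) by ring, Complex.cpow_add _ _ two_ne_zero,
      show ((3:ℂ)) = ((3:ℕ):ℂ) by norm_num, Complex.cpow_natCast]
    norm_num
  have ha0 : (a:ℂ) ≠ 0 := by exact_mod_cast ha.ne'
  have hab2 : ((a/2:ℝ):ℂ) ^ (s-1) = 2 * ((a/2:ℝ):ℂ) ^ s / (a:ℂ) := by
    rw [eq_div_iff ha0]
    linear_combination hab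
  rw [hab2, hbs, h23]
  field_simp
  ring

private lemma stmt7_prod_integrable {a : ℝ} (ha : 0 < a) {s : ℂ} (hs : 1 < s.re) :
    IntegrableOn (fun p : ℝ × ℝ =>
        (↑(min (min p.1 (a - p.1)) (min p.2 (a - p.2))) : ℂ) ^ (s - 2))
      (Ioo 0 a ×ˢ Ioo 0 a) volume := by
  set r : ℝ := s.re - 2 with hr
  have hr1 : -1 < r := by simp only [hr]; linarith
  set F : ℝ × ℝ → ℂ := fun p =>
    (↑(min (min p.1 (a - p.1)) (min p.2 (a - p.2))) : ℂ) ^ (s - 2) with hF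
  have hsq : MeasurableSet (Ioo (0:ℝ) a ×ˢ Ioo (0:ℝ) a) :=
    measurableSet_Ioo.prod measurableSet_Ioo
  -- continuity on the open square
  have hcont : ContinuousOn F (Ioo 0 a ×ˢ Ioo 0 a) := by
    intro p hp
    obtain ⟨hp1, hp2⟩ := hp
    have hm : 0 < min (min p.1 (a - p.1)) (min p.2 (a - p.2)) :=
      lt_min (lt_min hp1.1 (by linarith [hp1.2])) (lt_min hp2.1 (by linarith [hp2.2]))
    apply ContinuousAt.continuousWithinAt
    have hbase : Continuous (fun q : ℝ × ℝ =>
        (↑(min (min q.1 (a - q.1)) (min q.2 (a - q.2))) : ℂ)) := by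
      exact Complex.continuous_ofReal.comp
        (((continuous_fst.min (continuous_const.sub continuous_fst)).min
          (continuous_snd.min (continuous_const.sub continuous_snd))))
    exact (continuousAt_cpow_const (by
      rw [Complex.mem_slitPlane_iff]
      left
      simpa using hm)).comp hbase.continuousAt
  have haesm : AEStronglyMeasurable F (volume.restrict (Ioo 0 a ×ˢ Ioo 0 a)) :=
    hcont.aestronglyMeasurable hsq
  -- the bound
  set B : ℝ × ℝ → ℝ := fun p =>
    p.1 ^ r + (a - p.1) ^ r + (p.2 ^ r + (a - p.2) ^ r) with hB
  have hbound : ∀ p ∈ Ioo (0:ℝ) a ×ˢ Ioo (0:ℝ) a, ‖F p‖ ≤ B p := by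
    rintro p ⟨hp1, hp2⟩
    have h1 : 0 < p.1 := hp1.1
    have h2 : 0 < a - p.1 := by linarith [hp1.2]
    have h3 : 0 < p.2 := hp2.1
    have h4 : 0 < a - p.2 := by linarith [hp2.2]
    have hm : 0 < min (min p.1 (a - p.1)) (min p.2 (a - p.2)) :=
      lt_min (lt_min h1 h2) (lt_min h3 h4)
    have hnorm : ‖F p‖ = (min (min p.1 (a - p.1)) (min p.2 (a - p.2))) ^ r := by
      rw [hF]
      rw [Complex.norm_cpow_eq_rpow_re_of_pos hm]
      congr 1
    rw [hnorm]
    simp only [hB]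
    have n1 : (0:ℝ) ≤ p.1 ^ r := Real.rpow_nonneg h1.le r
    have n2 : (0:ℝ) ≤ (a - p.1) ^ r := Real.rpow_nonneg h2.le r
    have n3 : (0:ℝ) ≤ p.2 ^ r := Real.rpow_nonneg h3.le r
    have n4 : (0:ℝ) ≤ (a - p.2) ^ r := Real.rpow_nonneg h4.le r
    rcases min_cases (min p.1 (a - p.1)) (min p.2 (a - p.2)) with ⟨he, _⟩ | ⟨he, _⟩ <;>
      rw [he]
    · rcases min_cases p.1 (a - p.1) with ⟨he2, _⟩ | ⟨he2, _⟩ <;> rw [he2] <;> linarith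
    · rcases min_cases p.2 (a - p.2) with ⟨he2, _⟩ | ⟨he2, _⟩ <;> rw [he2] <;> linarith
  -- integrability of the bound
  have hio1 : IntegrableOn (fun t : ℝ => t ^ r) (Ioo 0 a) volume := by
    exact ((intervalIntegrable_rpow' hr1 (a := 0) (b := a)).1).mono_set Ioo_subset_Ioc_self
  have hio2 : IntegrableOn (fun t : ℝ => (a - t) ^ r) (Ioo 0 a) volume := by
    have h := (intervalIntegrable_rpow' hr1 (a := 0) (b := a)).comp_sub_left a
    rw [sub_zero, sub_self] at h
    exact (h.symm.1).mono_set Ioo_subset_Ioc_self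
  have hBint : IntegrableOn B (Ioo 0 a ×ˢ Ioo 0 a) volume := by
    rw [IntegrableOn, Measure.volume_eq_prod, ← Measure.prod_restrict]
    have p1 : Integrable (fun p : ℝ × ℝ => p.1 ^ r)
        ((volume.restrict (Ioo 0 a)).prod (volume.restrict (Ioo 0 a))) := by
      have := Integrable.mul_prod hio1 (integrable_const (1:ℝ) (μ := volume.restrict (Ioo (0:ℝ) a)))
      simpa using this
    have p2 : Integrable (fun p : ℝ × ℝ => (a - p.1) ^ r)
        ((volume.restrict (Ioo 0 a)).prod (volume.restrict (Ioo 0 a))) := by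
      have := Integrable.mul_prod hio2 (integrable_const (1:ℝ) (μ := volume.restrict (Ioo (0:ℝ) a)))
      simpa using this
    have p3 : Integrable (fun p : ℝ × ℝ => p.2 ^ r)
        ((volume.restrict (Ioo 0 a)).prod (volume.restrict (Ioo 0 a))) := by
      have := Integrable.mul_prod (integrable_const (1:ℝ) (μ := volume.restrict (Ioo (0:ℝ) a))) hio1
      simpa using this
    have p4 : Integrable (fun p : ℝ × ℝ => (a - p.2) ^ r)
        ((volume.restrict (Ioo 0 a)).prod (volume.restrict (Ioo 0 a))) := by
      have := Integrable.mul_prod (integrable_const (1:ℝ) (μ := volume.restrict (Ioo (0:ℝ) a))) hio2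
      simpa using this
    exact ((p1.add p2).add (p3.add p4))
  refine Integrable.mono' hBint haesm ?_
  rw [ae_restrict_iff' hsq]
  exact ae_of_all _ hbound

end Stmt7Aux

/-- for the open square `Ω = (0,a)² ⊂ ℝ²` with boundary `A = ∂Ω`, and every
`s ∈ ℂ` with `Re s > 1`, the relative distance zeta integral `∫_Ω d(x,A)^{s−2} dx`
converges absolutely and equals `2^{3−s} a^s / (s(s−1))`. -/
theorem stmt7 (a : ℝ) (ha : 0 < a) :
    ∀ s : ℂ, 1 < s.re →
      IntegrableOn
        (fun x : EuclideanSpace ℝ (Fin 2) =>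
          (Metric.infDist x (frontier {y : EuclideanSpace ℝ (Fin 2) | ∀ i, y i ∈ Ioo 0 a}) : ℂ)
            ^ (s - 2))
        {y : EuclideanSpace ℝ (Fin 2) | ∀ i, y i ∈ Ioo 0 a} volume ∧
      ∫ x in {y : EuclideanSpace ℝ (Fin 2) | ∀ i, y i ∈ Ioo 0 a},
          (Metric.infDist x (frontier {y : EuclideanSpace ℝ (Fin 2) | ∀ i, y i ∈ Ioo 0 a}) : ℂ)
            ^ (s - 2) =
        (2 : ℂ) ^ ((3 : ℂ) - s) * (a : ℂ) ^ s / (s * (s - 1)) := by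
  intro s hs
  set Ω := {y : EuclideanSpace ℝ (Fin 2) | ∀ i, y i ∈ Ioo 0 a} with hΩ
  set F : ℝ × ℝ → ℂ := fun p =>
    (↑(min (min p.1 (a - p.1)) (min p.2 (a - p.2))) : ℂ) ^ (s - 2) with hF
  set e : EuclideanSpace ℝ (Fin 2) ≃ᵐ ℝ × ℝ :=
    (MeasurableEquiv.toLp 2 (Fin 2 → ℝ)).symm.trans MeasurableEquiv.finTwoArrow with he
  have hmp : MeasurePreserving e volume volume :=
    (volume_preserving_finTwoArrow ℝ).comp
      (EuclideanSpace.volume_preserving_symm_measurableEquiv_toLp (Fin 2))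
  have hsq : MeasurableSet (Ioo (0:ℝ) a ×ˢ Ioo (0:ℝ) a) :=
    measurableSet_Ioo.prod measurableSet_Ioo
  have happ : ∀ x : EuclideanSpace ℝ (Fin 2), e x = (x 0, x 1) := fun x => rfl
  have hpre : e ⁻¹' (Ioo 0 a ×ˢ Ioo 0 a) = Ω := by
    ext y
    simp only [Set.mem_preimage, happ, Set.mem_prod, hΩ, Set.mem_setOf_eq]
    constructor
    · rintro ⟨h0, h1⟩ i
      fin_cases i
      · exact h0
      · exact h1
    · exact fun h => ⟨h 0, h 1⟩
  have hmeasΩ : MeasurableSet Ω := hpre ▸ hsq.preimage e.measurable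
  -- the integrand equals F ∘ e on Ω
  have hEq : Set.EqOn
      (fun x : EuclideanSpace ℝ (Fin 2) => ((infDist x (frontier Ω) : ℝ) : ℂ) ^ (s - 2))
      (fun x => F (e x)) Ω := by
    intro x hx
    have hd : infDist x (frontier Ω)
        = min (min (x 0) (a - x 0)) (min (x 1) (a - x 1)) := by
      rw [hΩ, stmt7_frontier ha]
      exact stmt7_infDist ha x hx
    simp only [hd, hF, happ]
  -- integrability
  have hFpre : IntegrableOn (fun x => F (e x)) Ω volume := by
    rw [← hpre]
    have h1 := (hmp.restrict_preimage hsq).integrable_comp_emb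
      (MeasurableEquiv.measurableEmbedding _) (g := F)
    exact h1.2 (stmt7_prod_integrable ha hs)
  refine ⟨hFpre.congr_fun hEq.symm hmeasΩ, ?_⟩
  have hconv : ∀ f : ℝ → ℂ, ∫ x in Ioo (0:ℝ) a, f x = ∫ x in (0:ℝ)..a, f x := fun f => by
    rw [intervalIntegral.integral_of_le ha.le, integral_Ioc_eq_integral_Ioo]
  calc
    ∫ x in Ω, ((infDist x (frontier Ω) : ℝ) : ℂ) ^ (s - 2)
        = ∫ x in Ω, F (e x) := setIntegral_congr_fun hmeasΩ hEq
    _ = ∫ p in Ioo (0:ℝ) a ×ˢ Ioo (0:ℝ) a, F p := by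
        rw [← hpre]
        exact hmp.setIntegral_preimage_emb e.measurableEmbedding F _
    _ = ∫ x in Ioo (0:ℝ) a, ∫ y in Ioo (0:ℝ) a, F (x, y) := by
        rw [Measure.volume_eq_prod]
        refine setIntegral_prod F ?_
        rw [← Measure.volume_eq_prod]
        exact stmt7_prod_integrable ha hs
    _ = ∫ x in Ioo (0:ℝ) a, (fun c : ℝ =>
          (a:ℂ) * (c:ℂ) ^ (s - 2) - 2 * (c:ℂ) ^ (s - 1) + 2 * (c:ℂ) ^ (s - 1) / (s - 1))
          (min x (a - x)) := by
        refine setIntegral_congr_ae measurableSet_Ioo ?_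
        have h0 : ∀ᵐ (x:ℝ), x ≠ a/2 := by
          rw [ae_iff]
          simpa [not_not, Set.setOf_eq_eq_singleton] using Real.volume_singleton (a := a/2)
        filter_upwards [h0] with x hx hmem
        have hc : 0 < min x (a - x) := lt_min hmem.1 (by linarith [hmem.2])
        have hca : min x (a - x) < a / 2 := by
          rcases lt_or_gt_of_ne hx with h | h
          · exact lt_of_le_of_lt (min_le_left _ _) h
          · exact lt_of_le_of_lt (min_le_right _ _) (by linarith)
        have := stmt7_inner_int ha hs hc hca
        rw [hconv (fun y => F (x, y))]
        exact this
    _ = ∫ x in (0:ℝ)..a, (fun c : ℝ =>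
          (a:ℂ) * (c:ℂ) ^ (s - 2) - 2 * (c:ℂ) ^ (s - 1) + 2 * (c:ℂ) ^ (s - 1) / (s - 1))
          (min x (a - x)) := hconv _
    _ = (2 : ℂ) ^ ((3 : ℂ) - s) * (a : ℂ) ^ s / (s * (s - 1)) := stmt7_outer_int ha hs
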